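/- Let n ≥ 9 and 4 ≤ i ≤ n−4, and let y = (1 i+1 i+3 i+4 ⋯ n i i−2 ⋯ 3 2)(i−1 i+2) ∈ S_n. For r ∈ S_n, if r y r^{-1} lies in a proper standard parabolic subgroup of S_n (i.e., in W_J for some proper subset J of the simple reflections), then the transposition (r(i−1), r(i+2)) equals (1,2) or (n−1, n). -/

import Mathlib

lemma mem_range1' (s n m : ℕ) : m ∈ List.range' s n ↔ s ≤ m ∧ m < s + n := by
  rw [List.mem_range']
  constructor
  · rintro ⟨c, hc, rfl⟩; omega
  · intro h; exact ⟨m - s, by omega, by omega⟩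

/-- let y = (1 i+1 i+3 ⋯ n i i−2 ⋯ 3 2)(i−1 i+2) ∈ S_n (n ≥ 9,
4 ≤ i ≤ n−4). If r ∈ S_n is such that r y r⁻¹ lies in a proper standard parabolic
subgroup (i.e. stabilizes an initial segment {1,…,k} with 1 ≤ k ≤ n−1), then the
transposition (r(i−1), r(i+2)) equals (1,2) or (n−1,n). -/
theorem stmt_14 (n i : ℕ) (hn : 9 ≤ n) (hi1 : 4 ≤ i) (hi2 : i ≤ n - 4)
    (l : List ℕ)
    (hl : l = 1 :: (i + 1) ::
      (List.range' (i + 3) (n - i - 2) ++ i :: (List.range' 2 (i - 3)).reverse))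
    (y : Equiv.Perm ℕ) (hy : y = l.formPerm * Equiv.swap (i - 1) (i + 2))
    (r : Equiv.Perm ℕ) (hr : ∀ a : ℕ, (a = 0 ∨ n < a) → r a = a)
    (hpar : ∃ k, 1 ≤ k ∧ k ≤ n - 1 ∧
      ∀ a, 1 ≤ a → a ≤ k → 1 ≤ (r * y * r⁻¹) a ∧ (r * y * r⁻¹) a ≤ k) :
    ({r (i - 1), r (i + 2)} : Set ℕ) = {1, 2} ∨
    ({r (i - 1), r (i + 2)} : Set ℕ) = {n - 1, n} := by
  obtain ⟨k, hk1, hk2, hkmap⟩ := hpar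
  set z := r * y * r⁻¹ with hzdef
  -- basic facts about the list l
  have hmem : ∀ x, x ∈ l ↔ (1 ≤ x ∧ x ≤ n ∧ x ≠ i - 1 ∧ x ≠ i + 2) := by
    intro x
    simp only [hl, List.mem_cons, List.mem_append, List.mem_reverse, mem_range1']
    omega
  have hnd : l.Nodup := by
    simp only [hl, List.nodup_cons, List.mem_cons, List.mem_append, List.mem_reverse,
      mem_range1', List.nodup_append, List.nodup_reverse, List.nodup_range',
      List.disjoint_left, not_or]
    exact ⟨by omega, by omega, List.nodup_range', ⟨by omega, List.nodup_range'⟩,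
      fun a ha => by omega⟩
  have hlen : l.length = n - 2 := by simp [hl]; omega
  -- r preserves [1,n]
  have hrange : ∀ x, 1 ≤ x → x ≤ n → 1 ≤ r x ∧ r x ≤ n := by
    intro x h1 h2
    by_contra h
    have hout : r x = 0 ∨ n < r x := by omega
    have h3 : r (r x) = r x := hr _ hout
    have h4 : r x = x := r.injective h3
    omega
  have hrinv_out : ∀ a : ℕ, (a = 0 ∨ n < a) → r⁻¹ a = a := by
    intro a ha
    have h1 : r a = a := hr a ha
    calc r⁻¹ a = r⁻¹ (r a) := by rw [h1]
    _ = a := r.symm_apply_apply a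
  have hrinvrange : ∀ x, 1 ≤ x → x ≤ n → 1 ≤ r⁻¹ x ∧ r⁻¹ x ≤ n := by
    intro x h1 h2
    by_contra h
    have hout : r⁻¹ x = 0 ∨ n < r⁻¹ x := by omega
    have h3 : r⁻¹ (r⁻¹ x) = r⁻¹ x := hrinv_out _ hout
    have h4 : r⁻¹ x = x := r⁻¹.injective h3
    omega
  -- y preserves [1,n]
  have hyrange : ∀ x, 1 ≤ x → x ≤ n → 1 ≤ y x ∧ y x ≤ n := by
    intro x h1 h2
    have hsw : 1 ≤ Equiv.swap (i - 1) (i + 2) x ∧ Equiv.swap (i - 1) (i + 2) x ≤ n := by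
      rcases eq_or_ne x (i - 1) with rfl | hx1
      · rw [Equiv.swap_apply_left]; omega
      rcases eq_or_ne x (i + 2) with rfl | hx2
      · rw [Equiv.swap_apply_right]; omega
      · rw [Equiv.swap_apply_of_ne_of_ne hx1 hx2]; omega
    rw [hy, Equiv.Perm.mul_apply]
    by_cases hmem2 : Equiv.swap (i - 1) (i + 2) x ∈ l
    · have := (hmem _).1 (l.formPerm_apply_mem_of_mem hmem2)
      omega
    · rw [List.formPerm_apply_of_notMem hmem2]; exact hsw
  -- conjugation formula
  have hconj : ∀ x, z (r x) = r (y x) := by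
    intro x
    simp [hzdef, Equiv.Perm.mul_apply]
  have hzrange : ∀ x, 1 ≤ x → x ≤ n → 1 ≤ z x ∧ z x ≤ n := by
    intro x h1 h2
    rw [hzdef]
    simp only [Equiv.Perm.mul_apply]
    obtain ⟨a1, a2⟩ := hrinvrange x h1 h2
    obtain ⟨b1, b2⟩ := hyrange _ a1 a2
    exact hrange _ b1 b2
  -- side invariance of z
  have hside : ∀ x, 1 ≤ x → x ≤ n → (z x ≤ k ↔ x ≤ k) := by
    intro x h1 h2
    constructor
    · intro hzk
      by_contra hxk
      push_neg at hxk
      have hsurj := Finset.surj_on_of_inj_on_of_card_le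
        (s := Finset.Icc 1 k) (t := Finset.Icc 1 k)
        (fun a _ => z a)
        (fun a ha => by
          rw [Finset.mem_Icc] at ha ⊢
          exact hkmap a ha.1 ha.2)
        (fun a₁ a₂ _ _ h => z.injective h) le_rfl
      have hzx_mem : z x ∈ Finset.Icc 1 k := by
        rw [Finset.mem_Icc]
        exact ⟨(hzrange x h1 h2).1, hzk⟩
      obtain ⟨a, ha, hax⟩ := hsurj _ hzx_mem
      have : a = x := z.injective hax.symm
      rw [Finset.mem_Icc] at ha
      omega
    · intro hxk
      exact (hkmap x h1 hxk).2
  -- membership facts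
  have h1mem : (1 : ℕ) ∈ l := (hmem 1).2 ⟨le_rfl, by omega, by omega, by omega⟩
  -- the key chain lemma: r is on one side of k on all of l
  have hpow : ∀ j : ℕ, ((l.formPerm ^ j) 1 ∈ l) ∧ (r ((l.formPerm ^ j) 1) ≤ k ↔ r 1 ≤ k) := by
    intro j
    induction j with
    | zero => simpa using h1mem
    | succ j ih =>
      obtain ⟨hu_mem, hu_iff⟩ := ih
      set u := (l.formPerm ^ j) 1 with hu
      have hstep : (l.formPerm ^ (j + 1)) 1 = l.formPerm u := by
        rw [pow_succ', Equiv.Perm.mul_apply]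
      have hcu_mem : l.formPerm u ∈ l := l.formPerm_apply_mem_of_mem hu_mem
      have hu_facts := (hmem u).1 hu_mem
      have hyu : y u = l.formPerm u := by
        rw [hy, Equiv.Perm.mul_apply, Equiv.swap_apply_of_ne_of_ne hu_facts.2.2.1 hu_facts.2.2.2]
      have hru := hrange u hu_facts.1 hu_facts.2.1
      have hiff : r (l.formPerm u) ≤ k ↔ r u ≤ k := by
        rw [← hyu, ← hconj]
        exact hside (r u) hru.1 hru.2
      rw [hstep]
      exact ⟨hcu_mem, hiff.trans hu_iff⟩
  have key : ∀ x ∈ l, (r x ≤ k ↔ r 1 ≤ k) := by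
    intro x hx
    obtain ⟨j, hj, hjx⟩ := List.mem_iff_getElem.1 hx
    have h0 : 0 < l.length := by omega
    have hform := List.formPerm_pow_apply_getElem l hnd j 0 h0
    have hl0 : l[0] = 1 := by simp [hl]
    rw [hl0, Nat.zero_add] at hform
    simp only [Nat.mod_eq_of_lt hj] at hform
    rw [hjx] at hform
    rw [← hform]
    exact (hpow j).2
  -- the transposed pair
  have hijne : (i - 1 : ℕ) ≠ i + 2 := by omega
  have hi1range : 1 ≤ i - 1 ∧ i - 1 ≤ n := by omega
  have hi2range : 1 ≤ i + 2 ∧ i + 2 ≤ n := by omega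
  have hab : r (i - 1) ≠ r (i + 2) := fun h => hijne (r.injective h)
  have haR := hrange _ hi1range.1 hi1range.2
  have hbR := hrange _ hi2range.1 hi2range.2
  have hi1notl : (i - 1) ∉ l := fun h => ((hmem _).1 h).2.2.1 rfl
  have hi2notl : (i + 2) ∉ l := fun h => ((hmem _).1 h).2.2.2 rfl
  have hy_i1 : y (i - 1) = i + 2 := by
    rw [hy, Equiv.Perm.mul_apply, Equiv.swap_apply_left, List.formPerm_apply_of_notMem hi2notl]
  have hz_ab : z (r (i - 1)) = r (i + 2) := by rw [hconj, hy_i1]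
  have hside_ab : r (i - 1) ≤ k ↔ r (i + 2) ≤ k := by
    rw [← hz_ab]
    exact (hside _ haR.1 haR.2).symm
  -- Finset counting
  set F : Finset ℕ := l.toFinset.image r with hF
  have hFcard : F.card = n - 2 := by
    rw [hF, Finset.card_image_of_injective _ r.injective, List.toFinset_card_of_nodup hnd, hlen]
  have haF : r (i - 1) ∉ F := by
    simp only [hF, Finset.mem_image, List.mem_toFinset]
    rintro ⟨x, hx, hrx⟩
    exact hi1notl (r.injective hrx ▸ hx)
  have hbF : r (i + 2) ∉ F := by
    simp only [hF, Finset.mem_image, List.mem_toFinset]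
    rintro ⟨x, hx, hrx⟩
    exact hi2notl (r.injective hrx ▸ hx)
  by_cases h1 : r 1 ≤ k
  · -- all of r(l) is ≤ k
    right
    have hFsub : F ⊆ Finset.Icc 1 k := by
      intro v hv
      simp only [hF, Finset.mem_image, List.mem_toFinset] at hv
      obtain ⟨x, hx, rfl⟩ := hv
      have hxf := (hmem x).1 hx
      rw [Finset.mem_Icc]
      exact ⟨(hrange x hxf.1 hxf.2.1).1, (key x hx).2 h1⟩
    have hkge : n - 2 ≤ k := by
      have := Finset.card_le_card hFsub
      rw [hFcard, Nat.card_Icc] at this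
      omega
    have hagt : ¬ (r (i - 1) ≤ k) := by
      intro hak
      have hbk : r (i + 2) ≤ k := hside_ab.1 hak
      have hsub2 : insert (r (i - 1)) (insert (r (i + 2)) F) ⊆ Finset.Icc 1 k := by
        intro v hv
        simp only [Finset.mem_insert] at hv
        rcases hv with rfl | rfl | hv
        · rw [Finset.mem_Icc]; exact ⟨haR.1, hak⟩
        · rw [Finset.mem_Icc]; exact ⟨hbR.1, hbk⟩
        · exact hFsub hv
      have hc2 : (insert (r (i - 1)) (insert (r (i + 2)) F)).card = n := by
        rw [Finset.card_insert_of_notMem (by simp [hab, haF]),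
          Finset.card_insert_of_notMem hbF, hFcard]
        omega
      have := Finset.card_le_card hsub2
      rw [hc2, Nat.card_Icc] at this
      omega
    have hbgt : ¬ (r (i + 2) ≤ k) := fun hb => hagt (hside_ab.2 hb)
    push_neg at hagt hbgt
    have hkle : k ≤ n - 2 := by omega
    have hkval : k = n - 2 := le_antisymm hkle hkge
    have : (r (i - 1) = n - 1 ∧ r (i + 2) = n) ∨ (r (i - 1) = n ∧ r (i + 2) = n - 1) := by
      omega
    rcases this with ⟨ha', hb'⟩ | ⟨ha', hb'⟩
    · rw [ha', hb']
    · rw [ha', hb', Set.pair_comm]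
  · -- all of r(l) is > k
    left
    have hFsub : F ⊆ Finset.Icc (k + 1) n := by
      intro v hv
      simp only [hF, Finset.mem_image, List.mem_toFinset] at hv
      obtain ⟨x, hx, rfl⟩ := hv
      have hxf := (hmem x).1 hx
      have hgt : ¬ (r x ≤ k) := fun hxk => h1 ((key x hx).1 hxk)
      rw [Finset.mem_Icc]
      exact ⟨by omega, (hrange x hxf.1 hxf.2.1).2⟩
    have hkle : k ≤ 2 := by
      have := Finset.card_le_card hFsub
      rw [hFcard, Nat.card_Icc] at this
      omega
    have hale : r (i - 1) ≤ k := by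
      by_contra hak
      have hbk : ¬ (r (i + 2) ≤ k) := fun hb => hak (hside_ab.2 hb)
      have hsub2 : insert (r (i - 1)) (insert (r (i + 2)) F) ⊆ Finset.Icc (k + 1) n := by
        intro v hv
        simp only [Finset.mem_insert] at hv
        rcases hv with rfl | rfl | hv
        · rw [Finset.mem_Icc]; exact ⟨by omega, haR.2⟩
        · rw [Finset.mem_Icc]; exact ⟨by omega, hbR.2⟩
        · exact hFsub hv
      have hc2 : (insert (r (i - 1)) (insert (r (i + 2)) F)).card = n := by
        rw [Finset.card_insert_of_notMem (by simp [hab, haF]),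
          Finset.card_insert_of_notMem hbF, hFcard]
        omega
      have := Finset.card_le_card hsub2
      rw [hc2, Nat.card_Icc] at this
      omega
    have hble : r (i + 2) ≤ k := hside_ab.1 hale
    have : (r (i - 1) = 1 ∧ r (i + 2) = 2) ∨ (r (i - 1) = 2 ∧ r (i + 2) = 1) := by
      omega
    rcases this with ⟨ha', hb'⟩ | ⟨ha', hb'⟩
    · rw [ha', hb']
    · rw [ha', hb', Set.pair_comm]
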